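/- There exists an admissible sequence d : ℕ → Fin 3 which is not eventually periodic such that for every n ≥ 1, |F(n)| = n + 1 and |P(n)| = 2^n + 1. (Hence the follower set sequence of the β-shift X_d grows linearly while its predecessor set sequence grows exponentially.) -/

import Mathlib

namespace BetaShift

variable {A : Type*}

/-- The shift map: `(shift x) n = x (n+1)`. -/
def shift (x : ℕ → A) : ℕ → A := fun n => x (n + 1)

/-- Lexicographic order on one-sided sequences: `x = y`, or there is an index `i`
such that `x j = y j` for all `j < i` and `x i < y i`. -/
def SeqLe [LinearOrder A] (x y : ℕ → A) : Prop :=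
  x = y ∨ ∃ i, (∀ j, j < i → x j = y j) ∧ x i < y i

/-- A word `w` occurs in the sequence `x`. -/
def Occurs (w : List A) (x : ℕ → A) : Prop :=
  ∃ i : ℕ, ∀ j : Fin w.length, x (i + j) = w.get j

/-- `Complexity x n` is the number `Φ_n(x)` of distinct words of length `n` occurring in `x`. -/
noncomputable def Complexity (x : ℕ → A) (n : ℕ) : ℕ :=
  Set.ncard {w : List A | w.length = n ∧ Occurs w x}

/-- A sequence is eventually periodic if there are `p ≥ 1` and `N` with
`d (i + p) = d i` for all `i ≥ N`. -/
def EventuallyPeriodic (d : ℕ → A) : Prop :=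
  ∃ p, 1 ≤ p ∧ ∃ N, ∀ i, N ≤ i → d (i + p) = d i

/-- `(d)_k`, the `k`-letter prefix of the sequence `d`, as a word. -/
def prefixWord (d : ℕ → A) (k : ℕ) : List A := List.ofFn (fun i : Fin k => d i)

variable {m : ℕ}

/-- `d` is admissible: every shift of `d` is lexicographically ≤ `d`,
and `d` is not eventually `0`. -/
def Admissible (d : ℕ → Fin m) : Prop :=
  (∀ i, SeqLe (shift^[i] d) d) ∧ ∀ N, ∃ i, N ≤ i ∧ (d i).val ≠ 0

/-- The one-sided β-shift `X_d` determined by the admissible sequence `d`. -/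
def XSet (d : ℕ → Fin m) : Set (ℕ → Fin m) :=
  {x | ∀ i, SeqLe (shift^[i] x) d}

/-- The language of `X_d`: all words occurring in some point of `X_d`. -/
def Lang (d : ℕ → Fin m) : Set (List (Fin m)) :=
  {w | ∃ x ∈ XSet d, Occurs w x}

/-- The follower set of the word `w` in `X_d`. -/
def Fol (d : ℕ → Fin m) (w : List (Fin m)) : Set (List (Fin m)) :=
  {u | w ++ u ∈ Lang d}

/-- The predecessor set of the word `w` in `X_d`. -/
def Pred (d : ℕ → Fin m) (w : List (Fin m)) : Set (List (Fin m)) :=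
  {s | s ++ w ∈ Lang d}

/-- The extender set of the word `w` in `X_d`. -/
def Ext (d : ℕ → Fin m) (w : List (Fin m)) : Set (List (Fin m) × List (Fin m)) :=
  {p | p.1 ++ w ++ p.2 ∈ Lang d}

/-- `|F(n)|`: the number of distinct follower sets of words of length `n` in `X_d`. -/
noncomputable def FolCount (d : ℕ → Fin m) (n : ℕ) : ℕ :=
  Set.ncard {S | ∃ w ∈ Lang d, w.length = n ∧ S = Fol d w}

/-- `|P(n)|`: the number of distinct predecessor sets of words of length `n` in `X_d`. -/
noncomputable def PredCount (d : ℕ → Fin m) (n : ℕ) : ℕ :=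
  Set.ncard {S | ∃ w ∈ Lang d, w.length = n ∧ S = Pred d w}

/-- `|E(n)|`: the number of distinct extender sets of words of length `n` in `X_d`. -/
noncomputable def ExtCount (d : ℕ → Fin m) (n : ℕ) : ℕ :=
  Set.ncard {S | ∃ w ∈ Lang d, w.length = n ∧ S = Ext d w}

/-- The largest `k ≤ n` such that the `k`-letter prefix of `d` is a suffix of `v`
(`k = 0`, the empty prefix, always works). -/
def classIndex (d : ℕ → Fin m) (n : ℕ) (v : List (Fin m)) : ℕ :=
  Nat.findGreatest (fun k => prefixWord d k <:+ v) n

/-- Lexicographic comparison of (equal-length) words: `u = v`, or at the first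
index where they differ, `u` takes the smaller value. -/
def WordLe [LinearOrder A] (u v : List A) : Prop :=
  u = v ∨ ∃ i, ∃ (hu : i < u.length) (hv : i < v.length),
    (∀ j (hju : j < u.length) (hjv : j < v.length), j < i → u.get ⟨j, hju⟩ = v.get ⟨j, hjv⟩) ∧
    u.get ⟨i, hu⟩ < v.get ⟨i, hv⟩

end BetaShift

open BetaShift

namespace Aux13
open BetaShift



def sh (p : ℕ) (e : ℕ → Fin 3) : ℕ → Fin 3 := fun j => e (j + p)

@[simp] lemma sh_apply (p : ℕ) (e : ℕ → Fin 3) (j : ℕ) : sh p e j = e (j + p) := rfl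

lemma sh_zero (e : ℕ → Fin 3) : sh 0 e = e := by funext j; simp

lemma sh_sh (p q : ℕ) (e : ℕ → Fin 3) : sh p (sh q e) = sh (p + q) e := by
  funext j; simp [Nat.add_assoc]

lemma shift_sh (e : ℕ → Fin 3) : shift e = sh 1 e := rfl

lemma shift_iterate (p : ℕ) (e : ℕ → Fin 3) : shift^[p] e = sh p e := by
  induction p generalizing e with
  | zero => rw [Function.iterate_zero_apply, sh_zero]
  | succ k ih =>
    rw [Function.iterate_succ_apply, ih, shift_sh, sh_sh]

def win (e : ℕ → Fin 3) (m : ℕ) : List (Fin 3) := List.ofFn (fun i : Fin m => e i)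

@[simp] lemma win_length (e : ℕ → Fin 3) (m : ℕ) : (win e m).length = m := by
  simp [win]

lemma win_getD (e : ℕ → Fin 3) (m j : ℕ) (h : j < m) : (win e m).getD j 0 = e j := by
  rw [List.getD_eq_getElem _ _ (by simpa using h)]
  simp [win]

lemma win_zero (e : ℕ → Fin 3) : win e 0 = [] := rfl

lemma win_succ (e : ℕ → Fin 3) (m : ℕ) : win e (m + 1) = e 0 :: win (sh 1 e) m := by
  simp [win, List.ofFn_succ, sh]

lemma drop_win (e : ℕ → Fin 3) (m i : ℕ) : (win e m).drop i = win (sh i e) (m - i) := by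
  apply List.ext_getElem
  · simp
  · intro j h1 h2
    simp only [List.getElem_drop]
    simp only [win, List.getElem_ofFn, sh]
    congr 1
    omega

lemma win_append (e : ℕ → Fin 3) (m k : ℕ) :
    win e (m + k) = win e m ++ win (sh m e) k := by
  apply List.ext_getElem
  · simp
  · intro j h1 h2
    simp only [win, List.getElem_ofFn]
    rcases Nat.lt_or_ge j m with h | h
    · rw [List.getElem_append_left (by simpa using h)]
      simp [win]
    · rw [List.getElem_append_right (by simpa using h)]
      simp only [win, List.getElem_ofFn, sh_apply]
      congr 1
      simp
      omega

def W : (ℕ → Fin 3) → List (Fin 3) → Prop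
  | _, [] => True
  | e, a :: t => a < e 0 ∨ (a = e 0 ∧ W (sh 1 e) t)

def Ws : (ℕ → Fin 3) → List (Fin 3) → Prop
  | _, [] => False
  | e, a :: t => a < e 0 ∨ (a = e 0 ∧ Ws (sh 1 e) t)

@[simp] lemma W_nil (e : ℕ → Fin 3) : W e [] := trivial

@[simp] lemma Ws_nil (e : ℕ → Fin 3) : ¬ Ws e [] := fun h => h

lemma W_cons (e : ℕ → Fin 3) (a : Fin 3) (t : List (Fin 3)) :
    W e (a :: t) ↔ a < e 0 ∨ (a = e 0 ∧ W (sh 1 e) t) := Iff.rfl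

lemma Ws_cons (e : ℕ → Fin 3) (a : Fin 3) (t : List (Fin 3)) :
    Ws e (a :: t) ↔ a < e 0 ∨ (a = e 0 ∧ Ws (sh 1 e) t) := Iff.rfl

lemma Ws_append (u v : List (Fin 3)) : ∀ e, Ws e (u ++ v) ↔
    Ws e u ∨ (u = win e u.length ∧ Ws (sh u.length e) v) := by
  induction u with
  | nil => intro e; simp [win_zero, sh_zero]
  | cons a t ih =>
    intro e
    simp only [List.cons_append, Ws_cons, ih (sh 1 e), sh_sh, List.length_cons, win_succ]
    constructor
    · rintro (h | ⟨h1, h2 | ⟨h3, h4⟩⟩)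
      · exact Or.inl (Or.inl h)
      · exact Or.inl (Or.inr ⟨h1, h2⟩)
      · refine Or.inr ⟨?_, h4⟩
        rw [h1, ← h3]
    · rintro (h | ⟨h1, h2⟩)
      · rcases h with h | ⟨h1, h2⟩
        · exact Or.inl h
        · exact Or.inr ⟨h1, Or.inl h2⟩
      · rw [List.cons.injEq] at h1
        exact Or.inr ⟨h1.1, Or.inr ⟨h1.2, h2⟩⟩

lemma W_append (u v : List (Fin 3)) : ∀ e, W e (u ++ v) ↔
    Ws e u ∨ (u = win e u.length ∧ W (sh u.length e) v) := by
  induction u with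
  | nil => intro e; simp [win_zero, sh_zero]
  | cons a t ih =>
    intro e
    simp only [List.cons_append, W_cons, Ws_cons, ih (sh 1 e), sh_sh, List.length_cons, win_succ]
    constructor
    · rintro (h | ⟨h1, h2 | ⟨h3, h4⟩⟩)
      · exact Or.inl (Or.inl h)
      · exact Or.inl (Or.inr ⟨h1, h2⟩)
      · refine Or.inr ⟨?_, h4⟩
        rw [h1, ← h3]
    · rintro (h | ⟨h1, h2⟩)
      · rcases h with h | ⟨h1, h2⟩
        · exact Or.inl h
        · exact Or.inr ⟨h1, Or.inl h2⟩
      · rw [List.cons.injEq] at h1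
        exact Or.inr ⟨h1.1, Or.inr ⟨h1.2, h2⟩⟩

lemma W_iff (e : ℕ → Fin 3) (v : List (Fin 3)) :
    W e v ↔ Ws e v ∨ v = win e v.length := by
  have := W_append v [] e
  simpa using this

lemma W_win (e : ℕ → Fin 3) (m : ℕ) : W e (win e m) := by
  rw [W_iff]; right; simp

lemma not_Ws_win (e : ℕ → Fin 3) (m : ℕ) : ¬ Ws e (win e m) := by
  induction m generalizing e with
  | zero => simp [win_zero]
  | succ k ih =>
    rw [win_succ, Ws_cons]
    rintro (h | ⟨-, h⟩)
    · exact absurd h (lt_irrefl _)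
    · exact ih (sh 1 e) h

lemma Ws_elim (e : ℕ → Fin 3) (v : List (Fin 3)) (h : Ws e v) :
    ∃ j, j < v.length ∧ (∀ i, i < j → v.getD i 0 = e i) ∧ v.getD j 0 < e j := by
  induction v generalizing e with
  | nil => exact absurd h (Ws_nil e)
  | cons a t ih =>
    rcases h with h | ⟨h1, h2⟩
    · exact ⟨0, by simp, by simp, by simpa using h⟩
    · obtain ⟨j, hj1, hj2, hj3⟩ := ih (sh 1 e) h2
      refine ⟨j + 1, by simpa using hj1, ?_, by simpa using hj3⟩
      intro i hi
      cases i with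
      | zero => simpa using h1
      | succ k => simpa using hj2 k (by omega)

lemma Ws_intro (e : ℕ → Fin 3) (v : List (Fin 3)) (j : ℕ) (hj : j < v.length)
    (h1 : ∀ i, i < j → v.getD i 0 = e i) (h2 : v.getD j 0 < e j) : Ws e v := by
  induction v generalizing e j with
  | nil => simp at hj
  | cons a t ih =>
    cases j with
    | zero =>
      left; simpa using h2
    | succ k =>
      right
      refine ⟨by simpa using h1 0 (by omega), ?_⟩
      refine ih (sh 1 e) k (by simpa using hj) ?_ (by simpa using h2)
      intro i hi
      simpa using h1 (i + 1) (by omega)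

lemma W_mono (e f : ℕ → Fin 3) (v : List (Fin 3)) (hef : SeqLe e f) (h : W e v) : W f v := by
  induction v generalizing e f with
  | nil => trivial
  | cons a t ih =>
    rcases hef with rfl | ⟨i, hi1, hi2⟩
    · exact h
    · cases i with
      | zero =>
        left
        rcases h with h | ⟨h, -⟩
        · exact lt_trans h hi2
        · exact h ▸ hi2
      | succ k =>
        have h0 : e 0 = f 0 := hi1 0 (by omega)
        rcases h with h | ⟨h1, h2⟩
        · exact Or.inl (h0 ▸ h)
        · refine Or.inr ⟨h0 ▸ h1, ih (sh 1 e) (sh 1 f) ?_ h2⟩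
          right
          exact ⟨k, fun j hj => by simpa using hi1 (j + 1) (by omega), by simpa using hi2⟩

lemma W_zero (e : ℕ → Fin 3) (v : List (Fin 3)) (h : ∀ x ∈ v, x = 0) : W e v := by
  induction v generalizing e with
  | nil => trivial
  | cons a t ih =>
    have ha : a = 0 := h a (by simp)
    by_cases h0 : e 0 = 0
    · exact Or.inr ⟨ha.trans h0.symm, ih (sh 1 e) fun x hx => h x (by simp [hx])⟩
    · exact Or.inl (ha ▸ Fin.pos_iff_ne_zero.mpr h0)

lemma not_W_of_diff (e : ℕ → Fin 3) (v : List (Fin 3)) (j : ℕ) (hj : j < v.length)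
    (h1 : ∀ i, i < j → v.getD i 0 = e i) (h2 : e j < v.getD j 0) : ¬ W e v := by
  induction v generalizing e j with
  | nil => simp at hj
  | cons a t ih =>
    cases j with
    | zero =>
      intro hw
      rcases hw with hw | ⟨hw, -⟩
      · exact absurd (lt_trans hw (by simpa using h2)) (lt_irrefl _)
      · rw [hw] at h2; exact absurd (by simpa using h2) (lt_irrefl (e 0))
    | succ k =>
      intro hw
      have h0 : a = e 0 := by simpa using h1 0 (by omega)
      rcases hw with hw | ⟨-, hw⟩
      · rw [h0] at hw; exact absurd hw (lt_irrefl _)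
      · exact ih (sh 1 e) k (by simpa using hj)
          (fun i hi => by simpa using h1 (i + 1) (by omega))
          (by simpa using h2) hw


/-- booleans to letters -/
def toF (b : Bool) : Fin 3 := if b then 1 else 0

/-- the blocks: binary words enumerated, with a `0` appended -/
def bl (k : ℕ) : List (Fin 3) := (((Encodable.decode (α := List Bool) k).getD []).map toF) ++ [0]

lemma bl_encode (l : List Bool) : bl (Encodable.encode l) = l.map toF ++ [0] := by
  simp [bl, Encodable.encodek]

lemma bl_len_pos (k : ℕ) : 0 < (bl k).length := by simp [bl]

lemma bl_mem_le1 (k : ℕ) (x : Fin 3) (hx : x ∈ bl k) : x ≤ 1 := by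
  rcases List.mem_append.mp hx with h | h
  · obtain ⟨b, -, rfl⟩ := List.mem_map.mp h
    cases b <;> simp [toF]
  · simp at h
    rw [h]
    exact Fin.zero_le _

/-- partial sums of block lengths -/
def S (k : ℕ) : ℕ := ∑ j ∈ Finset.range k, (bl j).length

lemma S_succ (k : ℕ) : S (k + 1) = S k + (bl k).length := Finset.sum_range_succ _ _

lemma S_mono : Monotone S := by
  intro a b hab
  exact Finset.sum_le_sum_of_subset (Finset.range_subset_range.mpr hab)

lemma le_S (k : ℕ) : k ≤ S k := by
  induction k with
  | zero => simp [S]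
  | succ n ih => rw [S_succ]; have := bl_len_pos n; omega

def K (n : ℕ) : ℕ := Nat.findGreatest (fun k => S k ≤ n) n

def c (n : ℕ) : Fin 3 := (bl (K n)).getD (n - S (K n)) 0

lemma K_eq (k i : ℕ) (hi : i < (bl k).length) : K (S k + i) = k := by
  rw [K, Nat.findGreatest_eq_iff]
  refine ⟨le_trans (le_S k) (by omega), fun _ => by omega, ?_⟩
  intro j hj1 hj2 hj3
  have h1 : S (k + 1) ≤ S j := S_mono hj1
  rw [S_succ] at h1
  omega

lemma c_eq (k i : ℕ) (hi : i < (bl k).length) : c (S k + i) = (bl k).getD i 0 := by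
  rw [c, K_eq k i hi]
  congr 1
  omega

lemma c_le1 (n : ℕ) : c n ≤ 1 := by
  rw [c]
  rcases Nat.lt_or_ge (n - S (K n)) (bl (K n)).length with h | h
  · rw [List.getD_eq_getElem _ _ h]
    exact bl_mem_le1 _ _ (List.getElem_mem h)
  · rw [List.getD_eq_default _ _ h]
    exact Fin.zero_le _

lemma univ_c (w : List (Fin 3)) (hw : ∀ x ∈ w, x ≤ 1) :
    ∃ p, ∀ j, j < w.length → c (p + j) = w.getD j 0 := by
  classical
  set l : List Bool := w.map (fun x => decide (x = 1)) with hl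
  set k := Encodable.encode l with hk
  have hbl : bl k = w ++ [0] := by
    rw [hk, bl_encode, hl, List.map_map]
    congr 1
    conv_rhs => rw [← List.map_id w]
    apply List.map_congr_left
    intro x hx
    have := hw x hx
    have hx2 : x = 0 ∨ x = 1 := by omega
    rcases hx2 with rfl | rfl <;> simp [toF]
  refine ⟨S k, fun j hj => ?_⟩
  rw [c_eq k j (by rw [hbl]; simp; omega), hbl]
  rw [List.getD_eq_getElem _ _ (by simp; omega), List.getElem_append_left hj,
    List.getD_eq_getElem _ _ hj]

/-- the driving sequence: `2` followed by a universal binary sequence -/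
def d : ℕ → Fin 3 := fun n => match n with
  | 0 => 2
  | m + 1 => c m

lemma d0 : d 0 = 2 := rfl

lemma d_le1 (p : ℕ) (hp : 0 < p) : d p ≤ 1 := by
  cases p with
  | zero => omega
  | succ m => exact c_le1 m

lemma d_le1' (p : ℕ) (hp : 0 < p) : (d p : ℕ) ≤ 1 := d_le1 p hp

lemma not_two_lt (p : ℕ) (hp : 0 < p) (x : Fin 3) (hx : (2 : Fin 3) ≤ x) : ¬ x < d p ∧ x ≠ d p := by
  have h1 := d_le1' p hp
  have h2 : (2 : ℕ) ≤ (x : ℕ) := hx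
  constructor
  · intro h; have := Fin.lt_def.mp h; omega
  · intro h; rw [h] at h2; omega

/-- occurrences of binary words in `d`, at positive positions -/
lemma dwin_occ (w : List (Fin 3)) (hw : ∀ x ∈ w, x ≤ 1) :
    ∃ p, 0 < p ∧ win (sh p d) w.length = w := by
  obtain ⟨q, hq⟩ := univ_c w hw
  refine ⟨q + 1, by omega, ?_⟩
  apply List.ext_getElem (by simp)
  intro j h1 h2
  have : d (j + (q + 1)) = c (q + j) := by
    show c (j + q) = c (q + j)
    rw [Nat.add_comm]
  simp only [win, List.getElem_ofFn, sh_apply]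
  rw [this, hq j (by simpa using h2), List.getD_eq_getElem _ _ h2]

lemma dInf : ∀ N, ∃ i, N ≤ i ∧ (d i : ℕ) ≠ 0 := by
  intro N
  set w : List (Fin 3) := List.replicate N 0 ++ [1] with hw
  have hmem : ∀ x ∈ w, x ≤ 1 := by
    intro x hx
    rcases List.mem_append.mp hx with h | h
    · rw [List.eq_of_mem_replicate h]; exact Fin.zero_le _
    · simp at h; simp [h]
  obtain ⟨q, hq⟩ := univ_c w hmem
  have hlen : w.length = N + 1 := by simp [hw]
  have := hq N (by omega)
  have hval : w.getD N 0 = 1 := by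
    rw [hw, List.getD_eq_getElem _ _ (by simp), List.getElem_append_right (by simp)]
    simp
  refine ⟨q + N + 1, by omega, ?_⟩
  show (c (q + N) : ℕ) ≠ 0
  rw [this, hval]
  simp

lemma adm : Admissible d := by
  constructor
  · intro i
    rw [shift_iterate]
    cases i with
    | zero => left; exact sh_zero d
    | succ k =>
      right
      refine ⟨0, by omega, ?_⟩
      show sh (k+1) d 0 < d 0
      have h1 : (sh (k+1) d 0 : ℕ) ≤ 1 := d_le1' (0 + (k + 1)) (by omega)
      have h2 : (d 0 : ℕ) = 2 := rfl
      exact Fin.lt_def.mpr (by omega)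
  · intro N
    obtain ⟨i, hi1, hi2⟩ := dInf N
    exact ⟨i, hi1, hi2⟩

lemma adm_sh (p : ℕ) : SeqLe (sh p d) d := by
  have := adm.1 p
  rwa [shift_iterate] at this

lemma toF_inj : Function.Injective toF := by
  intro a b hab
  cases a <;> cases b <;> revert hab <;> decide

lemma notEP : ¬ EventuallyPeriodic d := by
  rintro ⟨p0, hp0, N, hper⟩
  -- transport to canonical window
  have trans : ∀ i, N ≤ i → d i = d (N + (i - N) % p0) := by
    intro i
    induction i using Nat.strong_induction_on with
    | _ i ih =>
      intro hi
      rcases Nat.lt_or_ge i (N + p0) with h | h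
      · rw [Nat.mod_eq_of_lt (by omega)]
        congr 1
        omega
      · have h1 : d i = d (i - p0) := by
          have := hper (i - p0) (by omega)
          rw [← this]
          congr 1
          omega
        rw [h1, ih (i - p0) (by omega) (by omega)]
        congr 2
        have : i - N = (i - p0 - N) + p0 := by omega
        rw [this, Nat.add_mod_right]
  set L := N + p0 + 1 with hL
  -- injective map from (Fin L → Bool) to Fin (N + p0)
  have hinj : ∃ F : (Fin L → Bool) → Fin (N + p0), Function.Injective F := by
    classical
    have exP : ∀ f : Fin L → Bool, ∃ p, 0 < p ∧
        win (sh p d) (List.ofFn (fun i : Fin L => toF (f i))).length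
          = List.ofFn (fun i : Fin L => toF (f i)) := by
      intro f
      apply dwin_occ
      intro x hx
      simp only [List.mem_ofFn, Set.mem_range] at hx
      obtain ⟨i, rfl⟩ := hx
      cases (f i) <;> simp [toF]
    choose P hP1 hP2 using exP
    have canon : ∀ f : Fin L → Bool, ∃ q : ℕ, q < N + p0 ∧ ∀ j, d (q + j) = d (P f + j) := by
      intro f
      rcases Nat.lt_or_ge (P f) N with h | h
      · exact ⟨P f, by omega, fun j => rfl⟩
      · refine ⟨N + (P f - N) % p0, by have := Nat.mod_lt (P f - N) (show 0 < p0 by omega); omega, ?_⟩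
        intro j
        have e1 := trans (P f + j) (by omega)
        have e2 := trans (N + (P f - N) % p0 + j) (by omega)
        rw [e1, e2]
        congr 2
        have h3 : N + (P f - N) % p0 + j - N = (P f - N) % p0 + j := by omega
        have h4 : P f + j - N = (P f - N) + j := by omega
        rw [h3, h4]
        exact (Nat.ModEq.add_right j (Nat.mod_modEq (P f - N) p0)).symm.symm |>.symm.symm |> fun h => ((Nat.mod_modEq (P f - N) p0).add_right j)
    choose Q hQ1 hQ2 using canon
    refine ⟨fun f => ⟨Q f, hQ1 f⟩, ?_⟩
    intro f g hfg
    simp only [Fin.mk.injEq] at hfg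
    have key : ∀ h : Fin L → Bool, ∀ j (hj : j < L), toF (h ⟨j, hj⟩) = d (Q h + j) := by
      intro h j hj
      have hlen : (List.ofFn fun i : Fin L => toF (h i)).length = L := by simp [hL]
      have w1 : (win (sh (P h) d) (List.ofFn fun i : Fin L => toF (h i)).length).getD j 0
          = (List.ofFn fun i : Fin L => toF (h i)).getD j 0 := by rw [hP2 h]
      rw [win_getD _ _ _ (by rw [hlen]; exact hj)] at w1
      have w2 : (List.ofFn fun i : Fin L => toF (h i)).getD j 0 = toF (h ⟨j, hj⟩) := by
        rw [List.getD_eq_getElem _ _ (by rw [hlen]; exact hj)]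
        rw [List.getElem_ofFn]
      rw [w2] at w1
      rw [← w1, hQ2 h j]
      simp [Nat.add_comm]
    funext i
    apply toF_inj
    have k1 := key f i.1 i.2
    have k2 := key g i.1 i.2
    rw [k1, k2, hfg]
  obtain ⟨F, hF⟩ := hinj
  have hcard := Fintype.card_le_of_injective F hF
  rw [Fintype.card_fun, Fintype.card_fin, Fintype.card_fin, Fintype.card_bool] at hcard
  have h2 : N + p0 < 2 ^ L := by
    calc N + p0 < 2 ^ (N + p0) := Nat.lt_two_pow_self
    _ ≤ 2 ^ L := Nat.pow_le_pow_right (by omega) (by omega)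
  omega


lemma not_Ws_of_win (e : ℕ → Fin 3) (v : List (Fin 3)) (h : v = win e v.length) :
    ¬ Ws e v := by rw [h]; exact not_Ws_win e _

/-! ### language characterization -/

/-- `Good v`: every suffix of `v` is weakly below the corresponding prefix window of `d`. -/
def Good (v : List (Fin 3)) : Prop := ∀ i, W d (v.drop i)

lemma seqle_pad (u : List (Fin 3)) (x : ℕ → Fin 3) (hW : W d u)
    (h1 : ∀ j, j < u.length → x j = u.getD j 0)
    (h2 : ∀ j, u.length ≤ j → x j = 0) : SeqLe x d := by
  rcases (W_iff d u).mp hW with hs | he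
  · obtain ⟨j, hj1, hj2, hj3⟩ := Ws_elim d u hs
    right
    refine ⟨j, fun j' hj' => ?_, ?_⟩
    · rw [h1 j' (by omega), hj2 j' hj']
    · rw [h1 j hj1]; exact hj3
  · have hex : ∃ i, u.length ≤ i ∧ (d i).val ≠ 0 := dInf u.length
    set j := Nat.find hex with hj
    obtain ⟨hj1, hj2⟩ := Nat.find_spec hex
    right
    refine ⟨j, fun j' hj' => ?_, ?_⟩
    · rcases Nat.lt_or_ge j' u.length with h | h
      · rw [h1 j' h, he, win_getD _ _ _ h]
      · have := Nat.find_min hex (m := j') hj'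
        simp only [not_and, ne_eq, not_not] at this
        have hd : (d j').val = 0 := this h
        rw [h2 j' h]
        exact Fin.ext (by simpa using hd.symm)
    · rw [h2 j hj1]
      exact Fin.pos_iff_ne_zero.mpr (fun hc => hj2 (by rw [hc]; rfl))

lemma lang_iff (v : List (Fin 3)) : v ∈ Lang d ↔ Good v := by
  constructor
  · rintro ⟨x, hx, i0, hocc⟩
    intro i
    rcases Nat.lt_or_ge i v.length with hi | hi
    · have hdrop : v.drop i = win (sh (i0 + i) x) ((v.drop i).length) := by
        apply List.ext_getElem (by simp)
        intro j hj1 hj2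
        simp only [win, List.getElem_ofFn, sh_apply, List.getElem_drop]
        have := hocc ⟨i + j, by simp at hj1; omega⟩
        simp only [List.get_eq_getElem] at this
        rw [← this]
        congr 1
        omega
      have : W (sh (i0 + i) x) (v.drop i) := by
        conv_rhs => rw [hdrop]
        exact W_win _ _
      refine W_mono _ _ _ ?_ this
      have := hx (i0 + i)
      rwa [shift_iterate] at this
    · rw [List.drop_eq_nil_of_le hi]
      exact W_nil d
  · intro hg
    refine ⟨fun n => v.getD n 0, ?_, 0, ?_⟩
    · intro i
      rw [shift_iterate]
      apply seqle_pad (v.drop i) _ (hg i)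
      · intro j hj
        simp only [List.length_drop] at hj
        rw [sh_apply, List.getD_eq_getElem _ _ (by omega),
          List.getD_eq_getElem _ _ (by simpa using hj), List.getElem_drop]
        congr 1
        omega
      · intro j hj
        simp only [List.length_drop] at hj
        rw [sh_apply, List.getD_eq_default _ _ (by omega)]
    · intro j
      simp only [List.get_eq_getElem, Nat.zero_add]
      rw [List.getD_eq_getElem _ _ j.2]

lemma good_append (u v : List (Fin 3)) : Good (u ++ v) ↔
    Good u ∧ Good v ∧
      ∀ i, i < u.length → u.drop i = win d (u.length - i) → W (sh (u.length - i) d) v := by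
  constructor
  · intro G
    refine ⟨?_, ?_, ?_⟩
    · intro i
      rcases Nat.lt_or_ge i u.length with hi | hi
      · have := G i
        rw [List.drop_append_of_le_length (by omega), W_append] at this
        rw [W_iff]
        rcases this with h | ⟨h, -⟩
        · exact Or.inl h
        · right; rwa [List.length_drop] at h ⊢
      · rw [List.drop_eq_nil_of_le hi]; exact W_nil d
    · intro i
      have := G (u.length + i)
      rwa [List.drop_length_add_append] at this
    · intro i hi ht
      have := G i
      rw [List.drop_append_of_le_length (by omega), W_append] at this
      rcases this with h | ⟨-, h⟩
      · exact absurd h (not_Ws_of_win _ _ (by rwa [List.length_drop]))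
      · rwa [List.length_drop] at h
  · rintro ⟨hu, hv, ht⟩
    intro i
    rcases Nat.lt_or_ge i u.length with hi | hi
    · rw [List.drop_append_of_le_length (by omega), W_append]
      have := hu i
      rw [W_iff] at this
      rcases this with h | h
      · exact Or.inl h
      · right
        rw [List.length_drop] at h ⊢
        exact ⟨h, ht i hi h⟩
    · have : i = u.length + (i - u.length) := by omega
      rw [this, List.drop_length_add_append]
      exact hv _

lemma good_01 (v : List (Fin 3)) (hv : ∀ x ∈ v, x ≤ 1) : Good v := by
  intro i
  cases h : v.drop i with
  | nil => exact W_nil d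
  | cons a t =>
    left
    have ha : a ∈ v := (List.drop_subset i v) (by rw [h]; exact List.mem_cons_self)
    have := hv a ha
    have h2 : (d 0 : ℕ) = 2 := rfl
    exact Fin.lt_def.mpr (by omega)

lemma good_win (p m : ℕ) : Good (win (sh p d) m) := by
  intro i
  rw [drop_win, sh_sh]
  exact W_mono _ _ _ (adm_sh (i + p)) (W_win _ _)

lemma good_win0 (m : ℕ) : Good (win d m) := by
  have := good_win 0 m
  rwa [sh_zero] at this

/-! ### follower sets -/

/-- the largest `p ≤ |w|` such that the last `p` letters of `w` form the `p`-prefix of `d`. -/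
def maxT (w : List (Fin 3)) : ℕ :=
  Nat.findGreatest (fun p => w.drop (w.length - p) = win d p) w.length

/-- canonical follower sets -/
def H (k : ℕ) : Set (List (Fin 3)) := {u | Good u ∧ (k = 0 ∨ W (sh k d) u)}

lemma dom (p q : ℕ) (hp : 0 < p) (hpq : p ≤ q) (w : List (Fin 3)) (hq' : q ≤ w.length)
    (h1 : w.drop (w.length - p) = win d p) (h2 : w.drop (w.length - q) = win d q) :
    SeqLe (sh q d) (sh p d) := by
  have overlap : ∀ j, j < p → d j = d (j + (q - p)) := by
    intro j hj
    have e1 : (w.drop (w.length - q)).drop (q - p) = w.drop (w.length - p) := by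
      rw [List.drop_drop]
      congr 1
      omega
    rw [h2, drop_win] at e1
    have e2 := congrArg (fun l => l.getD j 0) e1
    rw [win_getD _ _ _ (by omega), h1, win_getD _ _ _ hj] at e2
    rw [← e2]
    rfl
  rcases adm_sh (q - p) with he | ⟨i0, hA, hB⟩
  · left
    have : sh p (sh (q - p) d) = sh p d := by rw [he]
    rwa [sh_sh, Nat.add_comm, Nat.sub_add_cancel hpq] at this
  · simp only [sh_apply] at hA hB
    have hi0 : p ≤ i0 := by
      by_contra hc
      rw [← overlap i0 (by omega)] at hB
      exact absurd hB (lt_irrefl _)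
    right
    refine ⟨i0 - p, fun j hj => ?_, ?_⟩
    · show d (j + q) = d (j + p)
      have := hA (j + p) (by omega)
      rw [← this]
      congr 1
      omega
    · show d ((i0 - p) + q) < d ((i0 - p) + p)
      have e3 : (i0 - p) + q = i0 + (q - p) := by omega
      have e4 : (i0 - p) + p = i0 := by omega
      rw [e3, e4]
      exact hB

lemma maxT_le (w : List (Fin 3)) : maxT w ≤ w.length := Nat.findGreatest_le _

lemma findGreatest_pos_spec {P : ℕ → Prop} [DecidablePred P] {b : ℕ}
    (h : 0 < Nat.findGreatest P b) : P (Nat.findGreatest P b) := by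
  have := (Nat.findGreatest_eq_iff (m := Nat.findGreatest P b) (P := P) (k := b)).mp rfl
  exact this.2.1 (by omega)

lemma fol_eq (w : List (Fin 3)) (hw : Good w) : Fol d w = H (maxT w) := by
  have base : ∀ u, u ∈ Fol d w ↔ Good (w ++ u) := by
    intro u
    rw [Fol, Set.mem_setOf_eq, lang_iff]
  ext u
  rw [base, good_append]
  constructor
  · rintro ⟨-, hu, ht⟩
    refine ⟨hu, ?_⟩
    rcases Nat.eq_zero_or_pos (maxT w) with h0 | h0
    · exact Or.inl h0
    · right
      have hspec : w.drop (w.length - maxT w) = win d (maxT w) :=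
        findGreatest_pos_spec (P := fun p => w.drop (w.length - p) = win d p) h0
      have hmle := maxT_le w
      have := ht (w.length - maxT w) (by omega)
        (by rw [show w.length - (w.length - maxT w) = maxT w by omega]; exact hspec)
      rwa [show w.length - (w.length - maxT w) = maxT w by omega] at this
  · rintro ⟨hu, hk⟩
    refine ⟨hw, hu, ?_⟩
    intro i hi htight
    set p := w.length - i with hp
    have hp1 : 0 < p := by omega
    have ht' : w.drop (w.length - p) = win d p := by
      rw [show w.length - p = i by omega]
      exact htight
    have hple : p ≤ maxT w := Nat.le_findGreatest (show p ≤ w.length by omega) ht'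
    have hk' : W (sh (maxT w) d) u := by
      rcases hk with h0 | h
      · omega
      · exact h
    refine W_mono _ _ _ ?_ hk'
    refine dom p (maxT w) hp1 hple w (maxT_le w) ht' ?_
    exact findGreatest_pos_spec (P := fun p => w.drop (w.length - p) = win d p)
      (show 0 < maxT w by omega)

/-- the realizing word for class `k`. -/
def wr (n k : ℕ) : List (Fin 3) := List.replicate (n - k) 0 ++ win d k

lemma wr_length (n k : ℕ) (hk : k ≤ n) : (wr n k).length = n := by
  simp [wr]; omega

lemma wr_good (n k : ℕ) : Good (wr n k) := by
  rw [wr, good_append]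
  refine ⟨good_01 _ (fun x hx => by rw [List.eq_of_mem_replicate hx]; exact Fin.zero_le _),
    good_win0 k, ?_⟩
  intro i hi ht
  exfalso
  simp only [List.length_replicate] at hi ht
  rw [List.drop_replicate] at ht
  have e : (List.replicate (n - k - i) (0 : Fin 3)).getD 0 0 = (win d (n - k - i)).getD 0 0 := by
    rw [ht]
  rw [win_getD _ _ _ (by omega), List.getD_eq_getElem _ _ (by simp; omega)] at e
  simp only [List.getElem_replicate] at e
  have h3 := congrArg Fin.val e
  have h2 : (d 0 : ℕ) = 2 := rfl
  simp only [Fin.val_zero] at h3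
  omega

lemma wr_maxT (n k : ℕ) (hk : k ≤ n) : maxT (wr n k) = k := by
  rw [maxT, wr_length n k hk, Nat.findGreatest_eq_iff]
  refine ⟨hk, fun _ => ?_, ?_⟩
  · rw [wr, List.drop_append_of_le_length (by simp), List.drop_replicate]
    simp
  · intro j hj1 hj2 hP
    rw [wr] at hP
    have hdrop : (List.replicate (n - k) (0 : Fin 3) ++ win d k).drop (n - j)
        = List.replicate (j - k) (0 : Fin 3) ++ win d k := by
      rw [List.drop_append_of_le_length (by simp; omega), List.drop_replicate]
      congr 2
      omega
    rw [hdrop] at hP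
    have e : (List.replicate (j - k) (0 : Fin 3) ++ win d k).getD 0 0 = (win d j).getD 0 0 := by
      rw [hP]
    rw [win_getD _ _ _ (by omega)] at e
    rw [List.getD_eq_getElem _ _ (by simp; omega)] at e
    rw [List.getElem_append_left (by simp; omega)] at e
    simp only [List.getElem_replicate] at e
    have h3 := congrArg Fin.val e
    have h2 : (d 0 : ℕ) = 2 := rfl
    simp only [Fin.val_zero] at h3
    omega

lemma good_two : Good [(2 : Fin 3)] := by
  intro i
  cases i with
  | zero => exact Or.inr ⟨rfl, trivial⟩
  | succ k => rw [List.drop_succ_cons, List.drop_nil]; exact W_nil d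

lemma not_W_two (q : ℕ) (hq : 0 < q) : ¬ W (sh q d) [(2 : Fin 3)] := by
  rintro (h | ⟨h, -⟩)
  · have := d_le1' q hq
    have h2 := Fin.lt_def.mp h
    simp only [sh_apply, Nat.zero_add] at h2
    omega
  · have := d_le1' q hq
    have h2 := congrArg Fin.val h
    simp only [sh_apply, Nat.zero_add] at h2
    rw [← h2] at this
    omega

lemma sh_ne (k k' : ℕ) (h : k < k') : sh k d ≠ sh k' d := by
  intro he
  apply notEP
  refine ⟨k' - k, by omega, k, ?_⟩
  intro i hi
  have := congrArg (fun f => f (i - k)) he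
  simp only [sh_apply] at this
  calc d (i + (k' - k)) = d ((i - k) + k') := by congr 1; omega
  _ = d ((i - k) + k) := this.symm
  _ = d i := by congr 1; omega

lemma H_ne (k k' : ℕ) (h : k < k') : H k ≠ H k' := by
  rcases Nat.eq_zero_or_pos k with rfl | hk
  · intro he
    have h2 : [(2:Fin 3)] ∈ H 0 := ⟨good_two, Or.inl rfl⟩
    rw [he] at h2
    rcases h2.2 with h0 | hW
    · omega
    · exact not_W_two k' h hW
  · intro he
    have hex : ∃ j, d (j + k) ≠ d (j + k') := by
      by_contra hc
      push_neg at hc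
      exact sh_ne k k' h (funext fun j => hc j)
    set j := Nat.find hex with hj
    have hspec := Nat.find_spec hex
    have hpre : ∀ i, i < j → d (i + k) = d (i + k') := by
      intro i hi
      by_contra hc
      exact absurd (Nat.find_min hex hi) (by simp [hc])
    rcases lt_or_gt_of_ne hspec with hlt | hgt
    · have hu : win (sh k' d) (j + 1) ∈ H k' := ⟨good_win k' (j+1), Or.inr (W_win _ _)⟩
      rw [← he] at hu
      rcases hu.2 with h0 | hW
      · omega
      · refine absurd hW (not_W_of_diff _ _ j (by simp) ?_ ?_)
        · intro i hi
          rw [win_getD _ _ _ (by omega)]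
          simp only [sh_apply]
          exact (hpre i hi).symm
        · rw [win_getD _ _ _ (by omega)]
          simp only [sh_apply]
          exact hlt
    · have hu : win (sh k d) (j + 1) ∈ H k := ⟨good_win k (j+1), Or.inr (W_win _ _)⟩
      rw [he] at hu
      rcases hu.2 with h0 | hW
      · omega
      · refine absurd hW (not_W_of_diff _ _ j (by simp) ?_ ?_)
        · intro i hi
          rw [win_getD _ _ _ (by omega)]
          simp only [sh_apply]
          exact hpre i hi
        · rw [win_getD _ _ _ (by omega)]
          simp only [sh_apply]
          exact hgt

lemma folCount_eq (n : ℕ) (hn : 1 ≤ n) : FolCount d n = n + 1 := by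
  have hset : {S | ∃ w ∈ Lang d, w.length = n ∧ S = Fol d w} = H '' (Set.Iic n) := by
    ext S
    constructor
    · rintro ⟨w, hwL, hlen, rfl⟩
      refine ⟨maxT w, ?_, ?_⟩
      · simp only [Set.mem_Iic]
        rw [← hlen]
        exact maxT_le w
      · exact (fol_eq w ((lang_iff w).mp hwL)).symm
    · rintro ⟨k, hk, rfl⟩
      simp only [Set.mem_Iic] at hk
      refine ⟨wr n k, (lang_iff _).mpr (wr_good n k), wr_length n k hk, ?_⟩
      rw [fol_eq _ (wr_good n k), wr_maxT n k hk]
  rw [FolCount, hset]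
  rw [Set.ncard_image_of_injOn]
  · rw [← Finset.coe_Iic, Set.ncard_coe_finset, Nat.card_Iic]
  · intro a _ b _ hab
    by_contra hne
    rcases lt_or_gt_of_ne hne with h | h
    · exact H_ne a b h hab
    · exact H_ne b a h hab.symm

/-! ### predecessor sets -/

lemma pred_mem (s w : List (Fin 3)) : s ∈ Pred d w ↔ Good (s ++ w) := by
  rw [Pred, Set.mem_setOf_eq, lang_iff]

lemma pred_det (w w' : List (Fin 3)) (hw : Good w) (hw' : Good w')
    (hB : ∀ p, 0 < p → (W (sh p d) w ↔ W (sh p d) w')) : Pred d w = Pred d w' := by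
  ext s
  rw [pred_mem, pred_mem, good_append, good_append]
  constructor
  · rintro ⟨hs, -, ht⟩
    refine ⟨hs, hw', fun i hi htight => ?_⟩
    exact (hB (s.length - i) (by omega)).mp (ht i hi htight)
  · rintro ⟨hs, -, ht⟩
    refine ⟨hs, hw, fun i hi htight => ?_⟩
    exact (hB (s.length - i) (by omega)).mpr (ht i hi htight)

/-- the extra representative: `2 0^(n-1)` -/
def z (n : ℕ) : List (Fin 3) := (2 : Fin 3) :: List.replicate (n - 1) 0

lemma z_length (n : ℕ) (hn : 1 ≤ n) : (z n).length = n := by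
  simp [z]; omega

lemma good_z (n : ℕ) : Good (z n) := by
  intro i
  cases i with
  | zero =>
    refine Or.inr ⟨rfl, ?_⟩
    exact W_zero _ _ (fun x hx => List.eq_of_mem_replicate hx)
  | succ k =>
    rw [z, List.drop_succ_cons, List.drop_replicate]
    exact W_zero _ _ (fun x hx => List.eq_of_mem_replicate hx)

lemma not_W_z (n p : ℕ) (hp : 0 < p) : ¬ W (sh p d) (z n) := by
  rintro (h | ⟨h, -⟩)
  · have := d_le1' p hp
    have h2 := Fin.lt_def.mp h
    simp only [sh_apply, Nat.zero_add] at h2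
    omega
  · have := d_le1' p hp
    have h2 := congrArg Fin.val h
    simp only [sh_apply, Nat.zero_add] at h2
    rw [← h2] at this
    omega

lemma dq_cases (q : ℕ) (hq : 0 < q) :
    ((0 : Fin 3) < d q ↔ ((1 : Fin 3) < d q ∨ (1 : Fin 3) = d q)) := by
  have h1 := d_le1' q hq
  constructor
  · intro h
    right
    have h2 := Fin.lt_def.mp h
    exact (Fin.ext (by omega : (1 : Fin 3).val = (d q).val))
  · intro h
    refine Fin.lt_def.mpr ?_
    rcases h with h | h
    · have := Fin.lt_def.mp h; omega
    · have := congrArg Fin.val h; simp at this; omega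

lemma not_one_lt_dq (q : ℕ) (hq : 0 < q) : ¬ ((1 : Fin 3) < d q) := by
  intro h
  have h1 := d_le1' q hq
  have h2 := Fin.lt_def.mp h
  omega

/-- representative lemma: the strict-drop set of a binary word `a` is either empty
or equals the weak set of a binary word of length `n`. -/
lemma rep_branch (a : List (Fin 3)) (ha : ∀ x ∈ a, x ≤ 1) (n : ℕ) (hn : a.length < n) :
    (∀ p, 0 < p → ¬ Ws (sh p d) a) ∨
    (∃ r, (∀ x ∈ r, x ≤ 1) ∧ r.length = n ∧
      ∀ p, 0 < p → (Ws (sh p d) a ↔ W (sh p d) r)) := by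
  induction a using List.reverseRecOn with
  | nil => exact Or.inl (fun p hp => Ws_nil _)
  | append_singleton a' x ih =>
    have ha' : ∀ y ∈ a', y ≤ 1 := fun y hy => ha y (by simp [hy])
    have hx : x ≤ 1 := ha x (by simp)
    have hlen : a'.length < n := by
      have := hn
      simp only [List.length_append, List.length_singleton] at this
      omega
    by_cases hx0 : x = 0
    · subst hx0
      right
      refine ⟨a' ++ 1 :: List.replicate (n - a'.length - 1) 0, ?_, ?_, ?_⟩
      · intro y hy
        rcases List.mem_append.mp hy with h | h
        · exact ha' y h
        · rcases List.mem_cons.mp h with rfl | h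
          · exact le_refl _
          · rw [List.eq_of_mem_replicate h]; exact Fin.zero_le _
      · simp only [List.length_append, List.length_cons, List.length_replicate]
        have := hn
        simp only [List.length_append, List.length_singleton] at this
        omega
      · intro p hp
        rw [Ws_append, W_append, sh_sh]
        have e0 : sh (a'.length + p) d 0 = d (a'.length + p) := by
          simp [sh_apply]
        constructor
        · rintro (h | ⟨h1, h2⟩)
          · exact Or.inl h
          · refine Or.inr ⟨h1, ?_⟩
            rcases h2 with h2 | ⟨-, h2⟩
            · rw [W_cons]
              rw [e0] at h2 ⊢
              rcases (dq_cases (a'.length + p) (by omega)).mp h2 with h | h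
              · exact Or.inl h
              · exact Or.inr ⟨h, W_zero _ _ (fun y hy => List.eq_of_mem_replicate hy)⟩
            · exact absurd h2 (Ws_nil _)
        · rintro (h | ⟨h1, h2⟩)
          · exact Or.inl h
          · refine Or.inr ⟨h1, ?_⟩
            left
            rcases h2 with h2 | ⟨h2, -⟩
            · rw [e0] at h2 ⊢
              exact (dq_cases (a'.length + p) (by omega)).mpr (Or.inl h2)
            · rw [e0] at h2 ⊢
              exact (dq_cases (a'.length + p) (by omega)).mpr (Or.inr h2)
    · have hx1 : x = 1 := by
        have h1 : (x : ℕ) ≤ 1 := hx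
        have h2 : (x : ℕ) ≠ 0 := fun h => hx0 (Fin.ext (by simpa using h))
        exact Fin.ext (by omega)
      subst hx1
      have key : ∀ p, 0 < p → (Ws (sh p d) (a' ++ [1]) ↔ Ws (sh p d) a') := by
        intro p hp
        rw [Ws_append, sh_sh]
        constructor
        · rintro (h | ⟨-, h2⟩)
          · exact h
          · rcases h2 with h2 | ⟨-, h2⟩
            · exact absurd (by simpa [sh_apply] using h2) (not_one_lt_dq (a'.length + p) (by omega))
            · exact absurd h2 (Ws_nil _)
        · exact Or.inl
      rcases ih ha' hlen with hL | ⟨r, h1, h2, h3⟩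
      · left
        intro p hp
        rw [key p hp]
        exact hL p hp
      · right
        refine ⟨r, h1, h2, fun p hp => ?_⟩
        rw [key p hp]
        exact h3 p hp

/-- the binary representatives -/
def T (n : ℕ) : Set (List (Fin 3)) := {w | w.length = n ∧ ∀ x ∈ w, x ≤ 1}

lemma key_w (w a b : List (Fin 3)) (hsplit : w = a ++ (2 : Fin 3) :: b) :
    ∀ p, 0 < p → (W (sh p d) w ↔ Ws (sh p d) a) := by
  intro p hp
  rw [hsplit, W_append, sh_sh]
  constructor
  · rintro (h | ⟨-, h2⟩)
    · exact h
    · exfalso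
      rcases h2 with h2 | ⟨h2, -⟩
      · have := d_le1' (a.length + p) (by omega)
        have h4 := Fin.lt_def.mp h2
        simp only [sh_apply, Nat.zero_add] at h4
        omega
      · have := d_le1' (a.length + p) (by omega)
        have h4 := congrArg Fin.val h2
        simp only [sh_apply, Nat.zero_add] at h4
        omega
  · exact Or.inl

/-- every word of the language of length `n` has the predecessor set of a representative. -/
lemma class_eq (n : ℕ) (hn : 1 ≤ n) (w : List (Fin 3)) (hw : Good w) (hlen : w.length = n) :
    ∃ r ∈ insert (z n) (T n), Pred d w = Pred d r := by
  by_cases hall : ∀ x ∈ w, x ≤ 1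
  · exact ⟨w, Set.mem_insert_of_mem _ ⟨hlen, hall⟩, rfl⟩
  · push_neg at hall
    obtain ⟨y, hy, hy2⟩ := hall
    have hex : ∃ k, k < w.length ∧ w.getD k 0 = 2 := by
      obtain ⟨k, hk, rfl⟩ := List.getElem_of_mem hy
      refine ⟨k, hk, ?_⟩
      · rw [List.getD_eq_getElem _ _ hk]
        have h1 : (w[k] : ℕ) < 3 := w[k].2
        have h2 : 1 < (w[k] : ℕ) := Fin.lt_def.mp hy2
        exact Fin.ext (by omega)
    set k := Nat.find hex with hk
    obtain ⟨hk1, hk2⟩ := Nat.find_spec hex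
    set a := w.take k with hadef
    set b := w.drop (k + 1) with hbdef
    have hsplit : w = a ++ (2 : Fin 3) :: b := by
      rw [hadef, hbdef]
      conv_lhs => rw [← List.take_append_drop k w]
      congr 1
      rw [List.drop_eq_getElem_cons hk1]
      congr 1
      rw [← List.getD_eq_getElem _ _ hk1]
      exact hk2
    have halen : a.length = k := by
      rw [hadef, List.length_take]
      omega
    have ha01 : ∀ x ∈ a, x ≤ 1 := by
      intro x hxmem
      obtain ⟨i, hi, rfl⟩ := List.getElem_of_mem hxmem
      have hik : i < k := by omega
      have hnotP := Nat.find_min hex hik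
      simp only [not_and, not_lt] at hnotP
      have hiw : i < w.length := by omega
      have hne2 : w.getD i 0 ≠ 2 := hnotP hiw
      have hval : a[i] = w[i]'hiw := by
        simp only [hadef]
        rw [List.getElem_take]
      rw [hval]
      rw [List.getD_eq_getElem _ _ hiw] at hne2
      have h1 : (w[i]'hiw : ℕ) < 3 := (w[i]'hiw).2
      have h2 : (w[i]'hiw : ℕ) ≠ 2 := fun h => hne2 (Fin.ext (by simpa using h))
      exact Fin.le_def.mpr (by omega)
    have hkW := key_w w a b hsplit
    have hka : a.length < n := by omega
    rcases rep_branch a ha01 n hka with hL | ⟨r, h1, h2, h3⟩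
    · refine ⟨z n, Set.mem_insert _ _, ?_⟩
      apply pred_det _ _ hw (good_z n)
      intro p hp
      rw [hkW p hp]
      constructor
      · intro h; exact absurd h (hL p hp)
      · intro h; exact absurd h (not_W_z n p hp)
    · refine ⟨r, Set.mem_insert_of_mem _ ⟨h2, h1⟩, ?_⟩
      apply pred_det _ _ hw (good_01 r h1)
      intro p hp
      rw [hkW p hp]
      exact h3 p hp

/-! ### separation of predecessor sets -/

lemma occ_r (n : ℕ) (r : List (Fin 3)) (hr : r ∈ T n) :
    ∃ p, 0 < p ∧ win (sh p d) n = r := by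
  obtain ⟨p, hp, hocc⟩ := dwin_occ r hr.2
  rw [hr.1] at hocc
  exact ⟨p, hp, hocc⟩

lemma mem_pred_self (p n : ℕ) (r : List (Fin 3)) (hocc : win (sh p d) n = r) :
    win d p ∈ Pred d r := by
  rw [pred_mem]
  have : win d p ++ r = win d (p + n) := by rw [win_append, hocc]
  rw [this]
  exact good_win0 _

lemma pred_boundary (p : ℕ) (w : List (Fin 3)) (h : win d p ∈ Pred d w) :
    W (sh p d) w := by
  rw [pred_mem] at h
  have h0 := h 0
  rw [List.drop_zero, W_append] at h0
  rcases h0 with h0 | ⟨-, h0⟩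
  · exact absurd h0 (not_Ws_of_win _ _ (by rw [win_length]))
  · rwa [win_length] at h0

lemma sep_lt (n : ℕ) (r r' : List (Fin 3)) (hrT : r ∈ T n) (hr'len : r'.length = n)
    (j : ℕ) (hj : j < n) (hpre : ∀ i, i < j → r.getD i 0 = r'.getD i 0)
    (hlt : r.getD j 0 < r'.getD j 0) : Pred d r ≠ Pred d r' := by
  obtain ⟨p, hp, hocc⟩ := occ_r n r hrT
  intro heq
  have hs : win d p ∈ Pred d r := mem_pred_self p n r hocc
  rw [heq] at hs
  have hW := pred_boundary p r' hs
  refine absurd hW (not_W_of_diff _ _ j (by omega) ?_ ?_)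
  · intro i hi
    rw [← hpre i hi, ← hocc, win_getD _ _ _ (by omega)]
  · have : (sh p d) j = r.getD j 0 := by rw [← hocc, win_getD _ _ _ (by omega)]
    rw [this]
    exact hlt

lemma sep1 (n : ℕ) (r r' : List (Fin 3)) (hrT : r ∈ T n) (hr'T : r' ∈ T n)
    (hne : r ≠ r') : Pred d r ≠ Pred d r' := by
  have hex : ∃ j, r.getD j 0 ≠ r'.getD j 0 := by
    by_contra hc
    push_neg at hc
    apply hne
    apply List.ext_getElem (by rw [hrT.1, hr'T.1])
    intro i h1 h2
    have := hc i
    rwa [List.getD_eq_getElem _ _ h1, List.getD_eq_getElem _ _ h2] at this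
  set j := Nat.find hex with hj
  have hspec := Nat.find_spec hex
  have hjn : j < n := by
    by_contra hc
    push_neg at hc
    apply hspec
    have hr1 := hrT.1
    have hr2 := hr'T.1
    rw [List.getD_eq_default _ _ (by omega), List.getD_eq_default _ _ (by omega)]
  have hpre : ∀ i, i < j → r.getD i 0 = r'.getD i 0 := by
    intro i hi
    exact not_not.mp (Nat.find_min hex hi)
  rcases lt_or_gt_of_ne hspec with h | h
  · exact sep_lt n r r' hrT hr'T.1 j hjn hpre h
  · exact (sep_lt n r' r hr'T hrT.1 j hjn (fun i hi => (hpre i hi).symm) h).symm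

lemma sep2 (n : ℕ) (r : List (Fin 3)) (hrT : r ∈ T n) : Pred d r ≠ Pred d (z n) := by
  obtain ⟨p, hp, hocc⟩ := occ_r n r hrT
  intro heq
  have hs : win d p ∈ Pred d r := mem_pred_self p n r hocc
  rw [heq] at hs
  exact not_W_z n p hp (pred_boundary p (z n) hs)

lemma z_not_T (n : ℕ) : z n ∉ T n := by
  rintro ⟨-, hall⟩
  have := hall 2 List.mem_cons_self
  have h2 := Fin.le_def.mp this
  omega

def emb (n : ℕ) (f : Fin n → Fin 2) : List (Fin 3) :=
  List.ofFn (fun i => (Fin.castLE (by omega) (f i) : Fin 3))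

lemma T_eq_image (n : ℕ) : T n = emb n '' Set.univ := by
  ext w
  constructor
  · rintro ⟨hlen, hall⟩
    refine ⟨fun i => ⟨(w[(i : ℕ)]'(by rw [hlen]; exact i.2) : Fin 3).val, ?_⟩, Set.mem_univ _, ?_⟩
    · have := hall (w[(i : ℕ)]'(by rw [hlen]; exact i.2)) (List.getElem_mem _)
      have h2 := Fin.le_def.mp this
      omega
    · apply List.ext_getElem (by simp [emb, hlen])
      intro i h1 h2
      simp only [emb, List.getElem_ofFn]
      exact Fin.ext (by simp [Fin.castLE])
  · rintro ⟨f, -, rfl⟩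
    constructor
    · simp [emb]
    · intro x hx
      simp only [emb, List.mem_ofFn, Set.mem_range] at hx
      obtain ⟨i, rfl⟩ := hx
      have : (f i : ℕ) < 2 := (f i).2
      exact Fin.le_def.mpr (by simpa using by omega)

lemma emb_inj (n : ℕ) : Function.Injective (emb n) := by
  intro f g hfg
  funext i
  have := congrArg (fun l => l.getD i 0) hfg
  simp only [emb] at this
  rw [List.getD_eq_getElem _ _ (by simpa using i.2), List.getD_eq_getElem _ _ (by simpa using i.2)] at this
  simp only [List.getElem_ofFn] at this
  have hv := congrArg Fin.val this
  exact Fin.ext (by simpa [Fin.castLE] using hv)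

lemma T_finite (n : ℕ) : (T n).Finite := by
  rw [T_eq_image]
  exact Set.Finite.image _ (Set.finite_univ)

lemma T_ncard (n : ℕ) : (T n).ncard = 2 ^ n := by
  rw [T_eq_image, Set.ncard_image_of_injective _ (emb_inj n), Set.ncard_univ,
    Nat.card_eq_fintype_card, Fintype.card_fun, Fintype.card_fin, Fintype.card_fin]

lemma predCount_eq (n : ℕ) (hn : 1 ≤ n) : PredCount d n = 2 ^ n + 1 := by
  have hset : {S | ∃ w ∈ Lang d, w.length = n ∧ S = Pred d w}
      = Pred d '' (insert (z n) (T n)) := by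
    ext S
    constructor
    · rintro ⟨w, hwL, hlen, rfl⟩
      obtain ⟨r, hrmem, heq⟩ := class_eq n hn w ((lang_iff w).mp hwL) hlen
      exact ⟨r, hrmem, heq.symm⟩
    · rintro ⟨r, hrmem, rfl⟩
      rcases Set.mem_insert_iff.mp hrmem with rfl | hrT
      · exact ⟨z n, (lang_iff _).mpr (good_z n), z_length n hn, rfl⟩
      · exact ⟨r, (lang_iff _).mpr (good_01 r hrT.2), hrT.1, rfl⟩
  have hinj : Set.InjOn (Pred d) (insert (z n) (T n)) := by
    intro r hr r' hr' heq
    by_contra hne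
    rcases Set.mem_insert_iff.mp hr with rfl | hrT
    · rcases Set.mem_insert_iff.mp hr' with rfl | hr'T
      · exact hne rfl
      · exact sep2 n r' hr'T heq.symm
    · rcases Set.mem_insert_iff.mp hr' with rfl | hr'T
      · exact sep2 n r hrT heq
      · exact sep1 n r r' hrT hr'T hne heq
  rw [PredCount, hset, Set.ncard_image_of_injOn hinj,
    Set.ncard_insert_of_notMem (z_not_T n) (T_finite n), T_ncard]

end Aux13


/-- there is a non-eventually-periodic admissible `d` over `Fin 3`
with `|F(n)| = n + 1` and `|P(n)| = 2^n + 1` for all `n ≥ 1`. -/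
theorem stmt13 :
    ∃ d : ℕ → Fin 3, Admissible d ∧ ¬ EventuallyPeriodic d ∧
      ∀ n, 1 ≤ n → FolCount d n = n + 1 ∧ PredCount d n = 2 ^ n + 1 := by
  exact ⟨Aux13.d, Aux13.adm, Aux13.notEP,
    fun n hn => ⟨Aux13.folCount_eq n hn, Aux13.predCount_eq n hn⟩⟩
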